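/- In the quotient algebra U/I (where U = Z⟨u_1,...,u_N⟩ is the free associative algebra and I is the two-sided ideal generated by the elements u_b(u_a u_c − u_c u_a) − (u_a u_c − u_c u_a)u_b for all a < b < c, together with all monomials containing a repeated variable), the noncommutative elementary symmetric functions e_i(u) and e_j(u) commute for all i, j. -/

import Mathlib

open scoped Classical

noncomputable section

/-- The monomial (word) `u_{l_1} u_{l_2} ⋯ u_{l_n}` in the free associative algebra
`U = ℤ⟨u_1, …, u_N⟩`, whose variables are indexed by `Fin N`. -/
def word (N : ℕ) (l : List (Fin N)) : FreeAlgebra ℤ (Fin N) :=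
  (l.map (FreeAlgebra.ι ℤ)).prod

/-- The generating relations of the two-sided ideal `I_RKst`:
`u_b (u_a u_c - u_c u_a) - (u_a u_c - u_c u_a) u_b = 0` for `a < b < c`, together with
`w = 0` for every word `w` with a repeated letter. -/
inductive RKRel (N : ℕ) : FreeAlgebra ℤ (Fin N) → FreeAlgebra ℤ (Fin N) → Prop
  | knuth_rotation (a b c : Fin N) (hab : a < b) (hbc : b < c) :
      RKRel N
        (FreeAlgebra.ι ℤ b *
            (FreeAlgebra.ι ℤ a * FreeAlgebra.ι ℤ c - FreeAlgebra.ι ℤ c * FreeAlgebra.ι ℤ a) -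
          (FreeAlgebra.ι ℤ a * FreeAlgebra.ι ℤ c - FreeAlgebra.ι ℤ c * FreeAlgebra.ι ℤ a) *
            FreeAlgebra.ι ℤ b)
        0
  | repeated (l : List (Fin N)) (h : ¬ l.Nodup) : RKRel N (word N l) 0

/-- The noncommutative elementary symmetric function
`e_d(u) = ∑_{N ≥ i_1 > i_2 > ⋯ > i_d ≥ 1} u_{i_1} ⋯ u_{i_d}` (so `e_0 = 1` and `e_d = 0`
for `d > N`). -/
def esym (N d : ℕ) : FreeAlgebra ℤ (Fin N) :=
  ∑ f : Fin d → Fin N, if StrictAnti f then word N (List.ofFn f) else 0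

/-- The canonical projection `U → U/I_RKst`. -/
def pr (N : ℕ) : FreeAlgebra ℤ (Fin N) →ₐ[ℤ] RingQuot (RKRel N) :=
  RingQuot.mkAlgHom ℤ (RKRel N)

namespace RKAux

variable {N : ℕ}

/-- generator in quotient -/
def uu (a : Fin N) : RingQuot (RKRel N) := pr N (FreeAlgebra.ι ℤ a)

/-- word in quotient -/
def pw (l : List (Fin N)) : RingQuot (RKRel N) := pr N (word N l)

lemma pw_nil : pw ([] : List (Fin N)) = 1 := by
  simp [pw, word, map_one]

lemma pw_cons (a : Fin N) (l : List (Fin N)) : pw (a :: l) = uu a * pw l := by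
  simp [pw, word, uu, List.map_cons, List.prod_cons, map_mul]

lemma pw_zero {l : List (Fin N)} (h : ¬ l.Nodup) : pw l = 0 := by
  have := RingQuot.mkAlgHom_rel ℤ (RKRel.repeated l h)
  simpa [pw, pr, map_zero] using this

lemma knuth {a b c : Fin N} (hab : a < b) (hbc : b < c) :
    uu b * (uu a * uu c - uu c * uu a) = (uu a * uu c - uu c * uu a) * uu b := by
  have := RingQuot.mkAlgHom_rel ℤ (RKRel.knuth_rotation a b c hab hbc)
  have h2 : pr N (FreeAlgebra.ι ℤ b *
        (FreeAlgebra.ι ℤ a * FreeAlgebra.ι ℤ c - FreeAlgebra.ι ℤ c * FreeAlgebra.ι ℤ a) -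
      (FreeAlgebra.ι ℤ a * FreeAlgebra.ι ℤ c - FreeAlgebra.ι ℤ c * FreeAlgebra.ι ℤ a) *
        FreeAlgebra.ι ℤ b) = 0 := by simpa [pr] using this
  have h3 := sub_eq_zero.mp (by simpa [map_sub, map_mul] using h2)
  simpa [uu] using h3

/-- `z c a = [u_a, u_c]` -/
def zz (c a : Fin N) : RingQuot (RKRel N) := uu a * uu c - uu c * uu a

lemma uu_mul_zz {a b c : Fin N} (hab : a < b) (hbc : b < c) :
    uu b * zz c a = zz c a * uu b := knuth hab hbc

lemma zz_mul_pw {c a : Fin N} {l : List (Fin N)} (h : a ∈ l) :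
    zz c a * pw l = 0 := by
  have h1 : uu a * uu c * pw l = pw (a :: c :: l) := by rw [pw_cons, pw_cons, mul_assoc]
  have h2 : uu c * uu a * pw l = pw (c :: a :: l) := by rw [pw_cons, pw_cons, mul_assoc]
  have n1 : ¬ (a :: c :: l).Nodup := by
    intro hn; exact (List.nodup_cons.mp hn).1 (List.mem_cons_of_mem _ h)
  have n2 : ¬ (c :: a :: l).Nodup := by
    intro hn
    exact (List.nodup_cons.mp (List.nodup_cons.mp hn).2).1 h
  rw [zz, sub_mul, h1, h2, pw_zero n1, pw_zero n2, sub_zero]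

/-- key straightening lemma, list version -/
lemma straighten_list (c : Fin N) :
    ∀ l : List (Fin N), l.Pairwise (· > ·) → (∀ a ∈ l, a < c) →
    pw l * uu c = uu c * pw l + (l.map (fun a => zz c a * pw (l.erase a))).sum := by
  intro l
  induction l with
  | nil => intro _ _; simp [pw_nil]
  | cons b v ih =>
    intro hp hc
    have hbv : ∀ a ∈ v, a < b := fun a ha => (List.pairwise_cons.mp hp).1 a ha
    have hv := (List.pairwise_cons.mp hp).2
    have hvc : ∀ a ∈ v, a < c := fun a ha => hc a (List.mem_cons_of_mem _ ha)
    have hbc : b < c := hc b List.mem_cons_self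
    have key : uu b * uu c = uu c * uu b + zz c b := by rw [zz, add_sub_cancel]
    have herase : (b :: v).erase b = v := by simp
    have herase2 : ∀ a ∈ v, (b :: v).erase a = b :: v.erase a := by
      intro a ha
      have : b ≠ a := fun h => absurd (h ▸ hbv a ha) (lt_irrefl _)
      rw [List.erase_cons_tail]
      simp [this]
    have hmove : v.map (fun a => uu b * (zz c a * pw (v.erase a)))
        = v.map (fun a => zz c a * pw ((b::v).erase a)) := by
      apply List.map_congr_left
      intro a ha
      rw [← mul_assoc, uu_mul_zz (hbv a ha) hbc, mul_assoc, herase2 a ha, pw_cons]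
    calc pw (b :: v) * uu c
        = uu b * (pw v * uu c) := by rw [pw_cons, mul_assoc]
      _ = uu b * (uu c * pw v + (v.map (fun a => zz c a * pw (v.erase a))).sum) := by
          rw [ih hv hvc]
      _ = uu b * uu c * pw v + (v.map (fun a => uu b * (zz c a * pw (v.erase a)))).sum := by
          rw [mul_add, ← mul_assoc, ← List.sum_map_mul_left]
      _ = uu c * (uu b * pw v) + (zz c b * pw v +
            (v.map (fun a => zz c a * pw ((b::v).erase a))).sum) := by
          rw [key, hmove]; noncomm_ring
      _ = uu c * pw (b :: v) + (((b::v)).map (fun a => zz c a * pw ((b::v).erase a))).sum := by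
          rw [List.map_cons, List.sum_cons, pw_cons, herase]

/-- decreasing list of a finset -/
def dl (S : Finset (Fin N)) : List (Fin N) := S.sort (· ≥ ·)

lemma dl_sorted (S : Finset (Fin N)) : (dl S).Pairwise (· ≥ ·) := Finset.pairwise_sort _ _

lemma dl_nodup (S : Finset (Fin N)) : (dl S).Nodup := Finset.sort_nodup _ _

lemma mem_dl {S : Finset (Fin N)} {a : Fin N} : a ∈ dl S ↔ a ∈ S := Finset.mem_sort _

lemma dl_pairwise_gt (S : Finset (Fin N)) : (dl S).Pairwise (· > ·) := by
  have h1 := dl_sorted S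
  have h2 := dl_nodup S
  exact (h1.and h2).imp (fun {a b} h => lt_of_le_of_ne h.1 (fun he => h.2 he.symm))

lemma dl_insert {S : Finset (Fin N)} {b : Fin N} (hb : ∀ x ∈ S, x < b) (hbS : b ∉ S) :
    dl (insert b S) = b :: dl S :=
  Finset.sort_insert _ (fun x hx => le_of_lt (hb x hx)) hbS

lemma dl_toFinset (S : Finset (Fin N)) : (dl S).toFinset = S := by
  ext x; simp [List.mem_toFinset, mem_dl]

lemma dl_erase {S : Finset (Fin N)} {a : Fin N} (ha : a ∈ S) :
    dl (S.erase a) = (dl S).erase a := by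
  apply List.Perm.eq_of_pairwise' (dl_sorted _) ((dl_sorted S).sublist List.erase_sublist) ?_
  apply List.perm_of_nodup_nodup_toFinset_eq (dl_nodup _) ((dl_nodup S).erase a)
  rw [dl_toFinset]
  ext x
  simp only [List.mem_toFinset, (dl_nodup S).mem_erase_iff, mem_dl, Finset.mem_erase]

/-- word of a finset, read in decreasing order -/
def W (S : Finset (Fin N)) : RingQuot (RKRel N) := pw (dl S)

lemma W_empty : W (∅ : Finset (Fin N)) = 1 := by
  simp [W, dl, pw_nil]

lemma W_insert {S : Finset (Fin N)} {b : Fin N} (hb : ∀ x ∈ S, x < b) (hbS : b ∉ S) :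
    W (insert b S) = uu b * W S := by
  rw [W, dl_insert hb hbS, pw_cons, W]

lemma zz_mul_W {c a : Fin N} {S : Finset (Fin N)} (h : a ∈ S) : zz c a * W S = 0 :=
  zz_mul_pw (mem_dl.mpr h)

lemma straighten_W {c : Fin N} {S : Finset (Fin N)} (hc : ∀ a ∈ S, a < c) :
    W S * uu c = uu c * W S + ∑ a ∈ S, zz c a * W (S.erase a) := by
  have h := straighten_list c (dl S) (dl_pairwise_gt S) (fun a ha => hc a (mem_dl.mp ha))
  rw [W, h]
  congr 1
  have h1 : List.map (fun a => zz c a * pw ((dl S).erase a)) (dl S)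
      = List.map (fun a => zz c a * W (S.erase a)) (dl S) :=
    List.map_congr_left (fun a ha => by rw [W, dl_erase (mem_dl.mp ha)])
  have h2 := (List.sum_toFinset (fun a => zz c a * W (S.erase a)) (dl_nodup S)).symm
  rw [dl_toFinset] at h2
  rw [h1, h2]

/-- letters with value `< k` -/
def Ik (N k : ℕ) : Finset (Fin N) := Finset.univ.filter (fun a => (a : ℕ) < k)

/-- `e_d` restricted to letters `< k`, in the quotient -/
def E (N : ℕ) (k d : ℕ) : RingQuot (RKRel N) := ∑ S ∈ (Ik N k).powersetCard d, W S

/-- `Z = ∑_{a < k} [u_a, u_c]` -/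
def Zc (c : Fin N) (k : ℕ) : RingQuot (RKRel N) := ∑ a ∈ Ik N k, zz c a

lemma E_zero (k : ℕ) : E N k 0 = 1 := by
  simp [E, Finset.powersetCard_zero, W_empty]

lemma Ik_zero : Ik N 0 = ∅ := by
  ext a; simp [Ik]

lemma E_zero_succ (d : ℕ) : E N 0 (d + 1) = 0 := by
  have h : (Ik N 0).powersetCard (d+1) = ∅ := by
    rw [Ik_zero]
    rw [Finset.powersetCard_eq_empty]
    simp
  simp [E, h]

lemma straighten_E {k : ℕ} {c : Fin N} (hc : ∀ a ∈ Ik N k, a < c) (d : ℕ) :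
    E N k (d+1) * uu c = uu c * E N k (d+1) + Zc c k * E N k d := by
  have hsub : ∀ S ∈ (Ik N k).powersetCard (d+1), ∀ a ∈ S, a < c := by
    intro S hS a ha
    exact hc a ((Finset.mem_powersetCard.mp hS).1 ha)
  rw [E, Finset.sum_mul]
  have step1 : ∀ S ∈ (Ik N k).powersetCard (d+1),
      W S * uu c = uu c * W S + ∑ a ∈ S, zz c a * W (S.erase a) := fun S hS =>
    straighten_W (hsub S hS)
  rw [Finset.sum_congr rfl step1, Finset.sum_add_distrib, ← Finset.mul_sum]
  congr 1
  -- exchange of summation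
  have key : ∑ S ∈ (Ik N k).powersetCard (d+1), ∑ a ∈ S, zz c a * W (S.erase a)
      = ∑ a ∈ Ik N k, ∑ T ∈ ((Ik N k).powersetCard d).filter (fun T => a ∉ T),
          zz c a * W T := by
    rw [Finset.sum_sigma' ((Ik N k).powersetCard (d+1)) (fun S => S)
      (fun S a => zz c a * W (S.erase a)),
      Finset.sum_sigma' (Ik N k) (fun a => ((Ik N k).powersetCard d).filter (fun T => a ∉ T))
      (fun a T => zz c a * W T)]
    refine Finset.sum_bij' (fun p _ => (⟨p.2, p.1.erase p.2⟩ : (_ : Fin N) × Finset (Fin N)))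
      (fun q _ => (⟨insert q.1 q.2, q.1⟩ : (_ : Finset (Fin N)) × Fin N)) ?_ ?_ ?_ ?_ ?_
    · rintro ⟨S, a⟩ hp
      rw [Finset.mem_sigma] at hp ⊢
      obtain ⟨hS, haS⟩ := hp
      rw [Finset.mem_powersetCard] at hS
      refine ⟨hS.1 haS, ?_⟩
      rw [Finset.mem_filter, Finset.mem_powersetCard]
      exact ⟨⟨(Finset.erase_subset a S).trans hS.1,
        by simp [Finset.card_erase_of_mem haS, hS.2]⟩, Finset.notMem_erase a S⟩
    · rintro ⟨a, T⟩ hq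
      rw [Finset.mem_sigma] at hq ⊢
      obtain ⟨ha, hT⟩ := hq
      rw [Finset.mem_filter, Finset.mem_powersetCard] at hT
      constructor
      · rw [Finset.mem_powersetCard]
        refine ⟨Finset.insert_subset ha hT.1.1, ?_⟩
        rw [Finset.card_insert_of_notMem hT.2, hT.1.2]
      · exact Finset.mem_insert_self a T
    · rintro ⟨S, a⟩ hp
      rw [Finset.mem_sigma] at hp
      exact Sigma.ext (Finset.insert_erase hp.2) HEq.rfl
    · rintro ⟨a, T⟩ hq
      rw [Finset.mem_sigma] at hq
      obtain ⟨_, hT⟩ := hq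
      rw [Finset.mem_filter] at hT
      exact Sigma.ext rfl (heq_of_eq (Finset.erase_insert hT.2))
    · rintro ⟨S, a⟩ _
      rfl
  rw [key, Zc, Finset.sum_mul]
  apply Finset.sum_congr rfl
  intro a _
  rw [E, Finset.mul_sum]
  apply Finset.sum_filter_of_ne
  intro T _ hne
  by_contra hmem
  exact hne (zz_mul_W hmem)

lemma mem_Ik {k : ℕ} {a : Fin N} : a ∈ Ik N k ↔ (a : ℕ) < k := by
  simp [Ik]

lemma Ik_lt {k : ℕ} (h : k < N) : ∀ a ∈ Ik N k, a < (⟨k, h⟩ : Fin N) := by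
  intro a ha
  exact mem_Ik.mp ha

lemma kk_not_mem {k : ℕ} (h : k < N) : (⟨k, h⟩ : Fin N) ∉ Ik N k := by
  simp [mem_Ik]

lemma Ik_succ {k : ℕ} (h : k < N) : Ik N (k+1) = insert (⟨k, h⟩ : Fin N) (Ik N k) := by
  ext a
  simp only [mem_Ik, Finset.mem_insert, mem_Ik]
  constructor
  · intro ha
    rcases Nat.lt_succ_iff_lt_or_eq.mp ha with h1 | h1
    · exact Or.inr h1
    · exact Or.inl (Fin.ext h1)
  · rintro (rfl | h1)
    · exact Nat.lt_succ_self k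
    · exact Nat.lt_succ_of_lt h1

lemma Ik_succ_of_ge {k : ℕ} (h : N ≤ k) : Ik N (k+1) = Ik N k := by
  ext a
  simp only [mem_Ik]
  have := a.isLt
  omega

lemma E_succ {k : ℕ} (h : k < N) (d : ℕ) :
    E N (k+1) (d+1) = E N k (d+1) + uu ⟨k, h⟩ * E N k d := by
  rw [E, Ik_succ h, Finset.powersetCard_succ_insert (kk_not_mem h), Finset.sum_union, E, E,
    Finset.mul_sum, Finset.sum_image]
  · congr 1
    apply Finset.sum_congr rfl
    intro S hS
    rw [Finset.mem_powersetCard] at hS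
    exact W_insert (fun x hx => Ik_lt h x (hS.1 hx))
      (fun hmem => kk_not_mem h (hS.1 hmem))
  · intro S hS T hT hST
    rw [Finset.mem_coe, Finset.mem_powersetCard] at hS hT
    have hS' : (⟨k, h⟩ : Fin N) ∉ S := fun hm => kk_not_mem h (hS.1 hm)
    have hT' : (⟨k, h⟩ : Fin N) ∉ T := fun hm => kk_not_mem h (hT.1 hm)
    rw [← Finset.erase_insert hS', ← Finset.erase_insert hT', hST]
  · rw [Finset.disjoint_right]
    rintro S hS hS'
    rw [Finset.mem_image] at hS
    obtain ⟨T, hT, rfl⟩ := hS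
    rw [Finset.mem_powersetCard] at hS'
    exact kk_not_mem h (hS'.1 (Finset.mem_insert_self _ _))

lemma uu_sq (c : Fin N) : uu c * uu c = 0 := by
  have : uu c * uu c = pw [c, c] := by rw [pw_cons, pw_cons, pw_nil, mul_one]
  rw [this, pw_zero (by simp)]

lemma uu_mul_zz_self (c a : Fin N) : uu c * zz c a = 0 := by
  have h1 : uu c * (uu a * uu c) = pw [c, a, c] := by
    rw [pw_cons, pw_cons, pw_cons, pw_nil, mul_one]
  have h2 : uu c * (uu c * uu a) = pw [c, c, a] := by
    rw [pw_cons, pw_cons, pw_cons, pw_nil, mul_one]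
  rw [zz, mul_sub, h1, h2, pw_zero (by simp), pw_zero (by simp), sub_zero]

lemma uu_mul_Zc (c : Fin N) (k : ℕ) : uu c * Zc c k = 0 := by
  rw [Zc, Finset.mul_sum]
  apply Finset.sum_eq_zero
  intro a _
  exact uu_mul_zz_self c a

lemma E_comm (k : ℕ) : ∀ i j : ℕ, E N k i * E N k j = E N k j * E N k i := by
  induction k with
  | zero =>
    intro i j
    cases i <;> cases j <;> simp [E_zero, E_zero_succ]
  | succ k ih =>
    by_cases h : k < N
    · set u := uu (⟨k, h⟩ : Fin N) with hu
      set Z := Zc (⟨k, h⟩ : Fin N) k with hZ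
      set B : ℕ → RingQuot (RKRel N) := fun d => E N k d with hB
      set Bp : ℕ → RingQuot (RKRel N) := fun d => match d with
        | 0 => 0
        | (m+1) => B m with hBp
      have h1 : ∀ i, E N (k+1) i = B i + u * Bp i := by
        intro i
        match i with
        | 0 => simp [E_zero, hBp, hB]
        | (m+1) => rw [E_succ h m]
      have h2 : ∀ i, B i * u = u * B i + Z * Bp i := by
        intro i
        match i with
        | 0 => simp [hB, hBp, E_zero]
        | (m+1) => exact straighten_E (Ik_lt h) m
      have h3 : u * u = 0 := uu_sq _
      have h4 : u * Z = 0 := uu_mul_Zc _ _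
      have h5 : ∀ i, u * (B i * u) = 0 := by
        intro i
        rw [h2 i, mul_add, ← mul_assoc, h3, zero_mul, ← mul_assoc, h4, zero_mul, add_zero]
      have h6 : ∀ i, u * (Bp i * u) = 0 := by
        intro i
        match i with
        | 0 => simp [hBp]
        | (m+1) => exact h5 m
      have key : ∀ i j, E N (k+1) i * E N (k+1) j
          = B i * B j + u * (B i * Bp j) + Z * (Bp i * Bp j) + u * (Bp i * B j) := by
        intro i j
        rw [h1 i, h1 j]
        have expand : (B i + u * Bp i) * (B j + u * Bp j)
            = B i * B j + B i * (u * Bp j) + (u * Bp i * B j + u * Bp i * (u * Bp j)) := by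
          noncomm_ring
        rw [expand]
        have t1 : B i * (u * Bp j) = u * (B i * Bp j) + Z * (Bp i * Bp j) := by
          rw [← mul_assoc, h2 i, add_mul, mul_assoc, mul_assoc]
        have t2 : u * Bp i * (u * Bp j) = 0 := by
          rw [mul_assoc, ← mul_assoc (Bp i), ← mul_assoc, h6 i, zero_mul]
        rw [t1, t2, add_zero, mul_assoc]
        abel
      have comm1 : ∀ i j, B i * Bp j = Bp j * B i := by
        intro i j
        match j with
        | 0 => simp [hBp]
        | (m+1) => exact ih i m
      have comm2 : ∀ i j, Bp i * Bp j = Bp j * Bp i := by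
        intro i j
        match i, j with
        | 0, j => simp [hBp]
        | (m+1), 0 => simp [hBp]
        | (m+1), (n+1) => exact ih m n
      have comm0 : ∀ i j, B i * B j = B j * B i := ih
      intro i j
      rw [key i j, key j i, comm0 i j, comm1 i j, ← comm1 j i, comm2 i j]
      abel
    · push_neg at h
      have hIk : ∀ i, E N (k+1) i = E N k i := by
        intro i
        rw [E, E, Ik_succ_of_ge h]
      intro i j
      rw [hIk i, hIk j]
      exact ih i j

lemma Ik_N : Ik N N = Finset.univ := by
  ext a; simp [mem_Ik, a.isLt]

lemma dl_image {d : ℕ} (f : Fin d → Fin N) (hf : StrictAnti f) :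
    dl (Finset.image f Finset.univ) = List.ofFn f := by
  have hperm : (dl (Finset.image f Finset.univ)).Perm (List.ofFn f) := by
    apply List.perm_of_nodup_nodup_toFinset_eq (dl_nodup _)
      (List.nodup_ofFn.mpr hf.injective)
    rw [dl_toFinset]
    ext x
    simp [List.mem_ofFn, Finset.mem_image]
  exact List.Perm.eq_of_pairwise' (dl_sorted _)
    (List.pairwise_ofFn.mpr (fun i j hij => le_of_lt (hf hij))) hperm

lemma pr_esym (d : ℕ) : pr N (esym N d) = E N N d := by
  rw [esym, map_sum]
  have step : ∀ f : Fin d → Fin N,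
      pr N (if StrictAnti f then word N (List.ofFn f) else 0)
        = if StrictAnti f then pw (List.ofFn f) else 0 := by
    intro f
    split <;> simp [pw]
  rw [Finset.sum_congr rfl (fun f _ => step f), ← Finset.sum_filter]
  rw [E, Ik_N]
  refine Finset.sum_bij' (fun f _ => Finset.image f Finset.univ)
    (fun S hS => fun i : Fin d =>
      (S.orderEmbOfFin (Finset.mem_powersetCard_univ.mp hS) i.rev : Fin N)) ?_ ?_ ?_ ?_ ?_
  · intro f hf
    rw [Finset.mem_filter] at hf
    rw [Finset.mem_powersetCard_univ, Finset.card_image_of_injective _ hf.2.injective,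
      Finset.card_univ, Fintype.card_fin]
  · intro S hS
    rw [Finset.mem_filter]
    refine ⟨Finset.mem_univ _, ?_⟩
    intro i j hij
    exact (S.orderEmbOfFin _).strictMono (Fin.rev_lt_rev.mpr hij)
  · intro f hf
    rw [Finset.mem_filter] at hf
    have hcard : (Finset.image f Finset.univ).card = d := by
      rw [Finset.card_image_of_injective _ hf.2.injective, Finset.card_univ, Fintype.card_fin]
    have hg : StrictMono (fun m : Fin d => f m.rev) := by
      intro m m' hm
      exact hf.2 (Fin.rev_lt_rev.mpr hm)
    have huniq := Finset.orderEmbOfFin_unique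
      (f := fun m : Fin d => f m.rev) hcard
      (fun x => Finset.mem_image_of_mem f (Finset.mem_univ _)) hg
    funext i
    have := congrFun huniq.symm i.rev
    simpa [Fin.rev_rev] using this
  · intro S hS
    have hrange : ∀ x, (S.orderEmbOfFin (Finset.mem_powersetCard_univ.mp hS)) x ∈ S := by
      intro x
      have := Finset.range_orderEmbOfFin S (Finset.mem_powersetCard_univ.mp hS)
      have : (S.orderEmbOfFin (Finset.mem_powersetCard_univ.mp hS)) x ∈
          Set.range (S.orderEmbOfFin (Finset.mem_powersetCard_univ.mp hS)) := Set.mem_range_self x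
      rw [Finset.range_orderEmbOfFin] at this
      exact this
    apply Finset.eq_of_subset_of_card_le
    · intro x hx
      rw [Finset.mem_image] at hx
      obtain ⟨m, _, rfl⟩ := hx
      exact hrange m.rev
    · have hinj : Function.Injective (fun i : Fin d =>
          (S.orderEmbOfFin (Finset.mem_powersetCard_univ.mp hS) i.rev : Fin N)) := by
        intro a b hab
        exact Fin.rev_injective
          ((S.orderEmbOfFin (Finset.mem_powersetCard_univ.mp hS)).injective hab)
      apply le_of_eq
      rw [Finset.card_image_of_injective _ hinj, Finset.card_univ, Fintype.card_fin,
        Finset.mem_powersetCard_univ.mp hS]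
  · intro f hf
    rw [Finset.mem_filter] at hf
    rw [W, dl_image f hf.2]

end RKAux

/-- In the quotient `U/I_RKst`, the noncommutative elementary symmetric functions
`e_i(u)` and `e_j(u)` commute for all `i, j`. -/
theorem esym_commute_in_quotient (N i j : ℕ) :
    pr N (esym N i * esym N j) = pr N (esym N j * esym N i) := by
  rw [map_mul, map_mul, RKAux.pr_esym, RKAux.pr_esym, RKAux.E_comm]

end
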